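/- arXiv:0903.4689 — 4 statements merged into one kernel-verified Lean document; each statement's English description precedes it below -/
import Mathlib

section
/- Let A and B be abelian categories, F : A → B a right exact additive functor, G : A → B a left exact additive functor, and T : F ⟹ G a natural transformation. Define the category C(F,G,T) whose objects are quadruples (A, B, m, n) with A ∈ A, B ∈ B, m : F(A) → B, n : B → G(A) satisfying n ∘ m = T_A, and whose morphisms (A,B,m,n) → (A',B',m',n') are pairs (a : A → A', b : B → B') making the evident squares commute. Then C(F,G,T) is an abelian category. -/
open CategoryTheory CategoryTheory.Limits

universe v₁ v₂ u₁ u₂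

variable {A : Type u₁} [Category.{v₁} A] {B : Type u₂} [Category.{v₂} B]

/-- An object of the MacPherson–Vilonen category `C(F,G,T)`: a quadruple
`(A, B, m, n)` with `m : F(A) ⟶ B`, `n : B ⟶ G(A)` and `n ∘ m = T_A`. -/
structure MVObj (F G : A ⥤ B) (T : F ⟶ G) where
  a : A
  b : B
  m : F.obj a ⟶ b
  n : b ⟶ G.obj a
  fac : m ≫ n = T.app a

/-- A morphism of the MacPherson–Vilonen category: a pair `(a, b)` making the two
evident squares commute. -/
@[ext]
structure MVHom {F G : A ⥤ B} {T : F ⟶ G} (X Y : MVObj F G T) where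
  fa : X.a ⟶ Y.a
  fb : X.b ⟶ Y.b
  comm_m : F.map fa ≫ Y.m = X.m ≫ fb
  comm_n : X.n ≫ G.map fa = fb ≫ Y.n

instance {F G : A ⥤ B} {T : F ⟶ G} : Category (MVObj F G T) where
  Hom := MVHom
  id X := ⟨𝟙 X.a, 𝟙 X.b, by simp, by simp⟩
  comp f g := ⟨f.fa ≫ g.fa, f.fb ≫ g.fb, by
      rw [Functor.map_comp, Category.assoc, g.comm_m, ← Category.assoc, f.comm_m,
        Category.assoc], by
      rw [Functor.map_comp, ← Category.assoc, f.comm_n, Category.assoc, g.comm_n,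
        ← Category.assoc]⟩
  id_comp f := by apply MVHom.ext <;> simp
  comp_id f := by apply MVHom.ext <;> simp
  assoc f g h := by apply MVHom.ext <;> simp

namespace MV

open ZeroObject

variable {F G : A ⥤ B} {T : F ⟶ G}

@[simp] lemma comp_fa {X Y Z : MVObj F G T} (f : X ⟶ Y) (g : Y ⟶ Z) :
    (f ≫ g).fa = f.fa ≫ g.fa := rfl

@[simp] lemma comp_fb {X Y Z : MVObj F G T} (f : X ⟶ Y) (g : Y ⟶ Z) :
    (f ≫ g).fb = f.fb ≫ g.fb := rfl

@[simp] lemma id_fa (X : MVObj F G T) : (𝟙 X : X ⟶ X).fa = 𝟙 X.a := rfl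
@[simp] lemma id_fb (X : MVObj F G T) : (𝟙 X : X ⟶ X).fb = 𝟙 X.b := rfl

section Preadditive

variable [Preadditive A] [Preadditive B] [F.Additive] [G.Additive]

/-- The subgroup of pairs of morphisms satisfying the MV commutation conditions. -/
def homSubgroup (X Y : MVObj F G T) : AddSubgroup ((X.a ⟶ Y.a) × (X.b ⟶ Y.b)) where
  carrier := {p | F.map p.1 ≫ Y.m = X.m ≫ p.2 ∧ X.n ≫ G.map p.1 = p.2 ≫ Y.n}
  add_mem' := by
    rintro ⟨pa, pb⟩ ⟨qa, qb⟩ ⟨h1, h2⟩ ⟨h3, h4⟩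
    constructor
    · simp only [Prod.fst_add, Prod.snd_add, Functor.map_add, Preadditive.add_comp,
        Preadditive.comp_add, h1, h3]
    · simp only [Prod.fst_add, Prod.snd_add, Functor.map_add, Preadditive.add_comp,
        Preadditive.comp_add, h2, h4]
  zero_mem' := by
    constructor <;> simp
  neg_mem' := by
    rintro ⟨pa, pb⟩ ⟨h1, h2⟩
    constructor
    · simp only [Prod.fst_neg, Prod.snd_neg, Functor.map_neg, Preadditive.neg_comp,
        Preadditive.comp_neg, h1]
    · simp only [Prod.fst_neg, Prod.snd_neg, Functor.map_neg, Preadditive.neg_comp,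
        Preadditive.comp_neg, h2]

/-- The equivalence between MV homs and the subgroup of pairs. -/
def homEquiv (X Y : MVObj F G T) : (X ⟶ Y) ≃ homSubgroup X Y where
  toFun f := ⟨(f.fa, f.fb), f.comm_m, f.comm_n⟩
  invFun p := ⟨p.1.1, p.1.2, p.2.1, p.2.2⟩
  left_inv f := rfl
  right_inv p := rfl

noncomputable instance : Preadditive (MVObj F G T) where
  homGroup X Y := (homEquiv X Y).addCommGroup
  add_comp P Q R f f' g := by
    apply MVHom.ext <;> exact Preadditive.add_comp _ _ _ _ _ _
  comp_add P Q R f g g' := by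
    apply MVHom.ext <;> exact Preadditive.comp_add _ _ _ _ _ _

@[simp] lemma add_fa {X Y : MVObj F G T} (f g : X ⟶ Y) : (f + g).fa = f.fa + g.fa := rfl
@[simp] lemma add_fb {X Y : MVObj F G T} (f g : X ⟶ Y) : (f + g).fb = f.fb + g.fb := rfl
@[simp] lemma zero_fa {X Y : MVObj F G T} : (0 : X ⟶ Y).fa = 0 := rfl
@[simp] lemma zero_fb {X Y : MVObj F G T} : (0 : X ⟶ Y).fb = 0 := rfl

end Preadditive


section Abelian

variable [Abelian A] [Abelian B] [F.Additive] [G.Additive]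

/-- The zero object of the MV category. -/
noncomputable def zeroObj : MVObj F G T where
  a := 0
  b := 0
  m := 0
  n := 0
  fac := (F.map_isZero (isZero_zero A)).eq_of_src _ _

noncomputable instance : HasZeroObject (MVObj F G T) where
  zero := ⟨zeroObj, {
    unique_to := fun Y => ⟨⟨⟨0⟩, fun f =>
      MVHom.ext ((isZero_zero A).eq_of_src _ _) ((isZero_zero B).eq_of_src _ _)⟩⟩
    unique_from := fun Y => ⟨⟨⟨0⟩, fun f => by
      apply MVHom.ext
      · exact (isZero_zero A).eq_of_tgt _ _
      · exact (isZero_zero B).eq_of_tgt _ _⟩⟩ }⟩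

/-- Joint monicity of the images under `G` of the biproduct projections. -/
lemma gext {W : B} {P Q : A} (u v : W ⟶ G.obj (P ⊞ Q))
    (h1 : u ≫ G.map biprod.fst = v ≫ G.map biprod.fst)
    (h2 : u ≫ G.map biprod.snd = v ≫ G.map biprod.snd) : u = v := by
  have t : (biprod.fst : P ⊞ Q ⟶ P) ≫ biprod.inl + biprod.snd ≫ biprod.inr = 𝟙 _ :=
    biprod.total
  calc u = u ≫ G.map (𝟙 _) := by simp
    _ = u ≫ G.map (biprod.fst ≫ biprod.inl + biprod.snd ≫ biprod.inr) := by rw [t]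
    _ = (u ≫ G.map biprod.fst) ≫ G.map biprod.inl
        + (u ≫ G.map biprod.snd) ≫ G.map biprod.inr := by
      rw [G.map_add, G.map_comp, G.map_comp, Preadditive.comp_add]
      simp only [Category.assoc]
    _ = (v ≫ G.map biprod.fst) ≫ G.map biprod.inl
        + (v ≫ G.map biprod.snd) ≫ G.map biprod.inr := by rw [h1, h2]
    _ = v ≫ G.map (biprod.fst ≫ biprod.inl + biprod.snd ≫ biprod.inr) := by
      rw [G.map_add, G.map_comp, G.map_comp, Preadditive.comp_add]
      simp only [Category.assoc]
    _ = v := by rw [t]; simp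

/-- Binary product of MV objects. -/
noncomputable def prodObj (X Y : MVObj F G T) : MVObj F G T where
  a := X.a ⊞ Y.a
  b := X.b ⊞ Y.b
  m := biprod.lift (F.map biprod.fst ≫ X.m) (F.map biprod.snd ≫ Y.m)
  n := biprod.desc (X.n ≫ G.map biprod.inl) (Y.n ≫ G.map biprod.inr)
  fac := by
    rw [biprod.lift_desc, Category.assoc, Category.assoc, reassoc_of% X.fac,
      reassoc_of% Y.fac, T.naturality_assoc, T.naturality_assoc, ← G.map_comp, ← G.map_comp,
      ← Preadditive.comp_add, ← G.map_add, biprod.total, G.map_id, Category.comp_id]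

lemma prod_m_fst (X Y : MVObj F G T) :
    (prodObj X Y).m ≫ biprod.fst = F.map biprod.fst ≫ X.m := biprod.lift_fst _ _

lemma prod_m_snd (X Y : MVObj F G T) :
    (prodObj X Y).m ≫ biprod.snd = F.map biprod.snd ≫ Y.m := biprod.lift_snd _ _

noncomputable def prodFst (X Y : MVObj F G T) : prodObj X Y ⟶ X where
  fa := biprod.fst
  fb := biprod.fst
  comm_m := by simp [prodObj]
  comm_n := by
    apply biprod.hom_ext' <;> simp [prodObj, ← G.map_comp]

noncomputable def prodSnd (X Y : MVObj F G T) : prodObj X Y ⟶ Y where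
  fa := biprod.snd
  fb := biprod.snd
  comm_m := by simp [prodObj]
  comm_n := by
    apply biprod.hom_ext' <;> simp [prodObj, ← G.map_comp]

lemma prod_n_fst (X Y : MVObj F G T) :
    (prodObj X Y).n ≫ G.map (biprod.fst : X.a ⊞ Y.a ⟶ X.a) = biprod.fst ≫ X.n :=
  (prodFst X Y).comm_n

lemma prod_n_snd (X Y : MVObj F G T) :
    (prodObj X Y).n ≫ G.map (biprod.snd : X.a ⊞ Y.a ⟶ Y.a) = biprod.snd ≫ Y.n :=
  (prodSnd X Y).comm_n

noncomputable def prodIsLimit (X Y : MVObj F G T) :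
    IsLimit (BinaryFan.mk (prodFst X Y) (prodSnd X Y)) :=
  BinaryFan.isLimitMk
    (fun s => {
      fa := biprod.lift (BinaryFan.fst s).fa (BinaryFan.snd s).fa
      fb := biprod.lift (BinaryFan.fst s).fb (BinaryFan.snd s).fb
      comm_m := by
        apply biprod.hom_ext
        · erw [Category.assoc, Category.assoc, prod_m_fst, biprod.lift_fst,
            ← Category.assoc, ← F.map_comp, biprod.lift_fst]
          exact s.fst.comm_m
        · erw [Category.assoc, Category.assoc, prod_m_snd, biprod.lift_snd,
            ← Category.assoc, ← F.map_comp, biprod.lift_snd]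
          exact s.snd.comm_m
      comm_n := by
        apply gext
        · erw [Category.assoc, ← G.map_comp, biprod.lift_fst, Category.assoc,
            prod_n_fst, ← Category.assoc, biprod.lift_fst]
          exact s.fst.comm_n
        · erw [Category.assoc, ← G.map_comp, biprod.lift_snd, Category.assoc,
            prod_n_snd, ← Category.assoc, biprod.lift_snd]
          exact s.snd.comm_n })
    (fun s => MVHom.ext (biprod.lift_fst _ _) (biprod.lift_fst _ _))
    (fun s => MVHom.ext (biprod.lift_snd _ _) (biprod.lift_snd _ _))
    (fun s mor h1 h2 => by
      apply MVHom.ext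
      · apply biprod.hom_ext
        · exact (congrArg MVHom.fa h1).trans (biprod.lift_fst _ _).symm
        · exact (congrArg MVHom.fa h2).trans (biprod.lift_snd _ _).symm
      · apply biprod.hom_ext
        · exact (congrArg MVHom.fb h1).trans (biprod.lift_fst _ _).symm
        · exact (congrArg MVHom.fb h2).trans (biprod.lift_snd _ _).symm)

noncomputable instance (X Y : MVObj F G T) : HasLimit (pair X Y) :=
  HasLimit.mk ⟨_, prodIsLimit X Y⟩

instance : HasBinaryProducts (MVObj F G T) :=
  hasBinaryProducts_of_hasLimit_pair _

instance : HasFiniteProducts (MVObj F G T) :=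
  hasFiniteProducts_of_has_binary_and_terminal

section KerCoker

variable [PreservesFiniteColimits F] [PreservesFiniteLimits G]

lemma inv_kernelComparison_comp_map_ι {P Q : A} (f : P ⟶ Q) :
    inv (kernelComparison f G) ≫ G.map (kernel.ι f) = kernel.ι (G.map f) := by
  rw [← kernelComparison_comp_ι, IsIso.inv_hom_id_assoc]

lemma map_π_comp_inv_cokernelComparison {P Q : A} (f : P ⟶ Q) :
    F.map (cokernel.π f) ≫ inv (cokernelComparison f F) = cokernel.π (F.map f) := by
  rw [← π_comp_cokernelComparison, Category.assoc, IsIso.hom_inv_id, Category.comp_id]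

variable {X Y : MVObj F G T}

noncomputable def kerM (f : X ⟶ Y) : F.obj (kernel f.fa) ⟶ kernel f.fb :=
  kernel.lift f.fb (F.map (kernel.ι f.fa) ≫ X.m) (by
    rw [Category.assoc, ← f.comm_m, ← Category.assoc, ← F.map_comp, kernel.condition,
      F.map_zero, zero_comp])

noncomputable def kerN (f : X ⟶ Y) : kernel f.fb ⟶ G.obj (kernel f.fa) :=
  kernel.lift (G.map f.fa) (kernel.ι f.fb ≫ X.n) (by
      rw [Category.assoc, f.comm_n, ← Category.assoc, kernel.condition, zero_comp])
    ≫ inv (kernelComparison f.fa G)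

lemma kerM_ι (f : X ⟶ Y) :
    kerM f ≫ kernel.ι f.fb = F.map (kernel.ι f.fa) ≫ X.m :=
  kernel.lift_ι _ _ _

lemma kerN_ι (f : X ⟶ Y) :
    kerN f ≫ G.map (kernel.ι f.fa) = kernel.ι f.fb ≫ X.n := by
  simp only [kerN, Category.assoc, inv_kernelComparison_comp_map_ι, kernel.lift_ι]

/-- Kernel object of an MV morphism. -/
noncomputable def kerObj (f : X ⟶ Y) : MVObj F G T where
  a := kernel f.fa
  b := kernel f.fb
  m := kerM f
  n := kerN f
  fac := by
    have hmono : Mono (G.map (kernel.ι f.fa)) := inferInstance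
    rw [← cancel_mono (G.map (kernel.ι f.fa)), Category.assoc, kerN_ι, ← Category.assoc,
      kerM_ι, Category.assoc, X.fac, T.naturality]

/-- The kernel inclusion. -/
noncomputable def kerι (f : X ⟶ Y) : kerObj f ⟶ X where
  fa := kernel.ι f.fa
  fb := kernel.ι f.fb
  comm_m := (kerM_ι f).symm
  comm_n := kerN_ι f

lemma kerι_comp (f : X ⟶ Y) : kerι f ≫ f = 0 := by
  apply MVHom.ext
  · exact kernel.condition f.fa
  · exact kernel.condition f.fb

/-- The kernel fork is a limit. -/
noncomputable def kerIsLimit (f : X ⟶ Y) :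
    IsLimit (KernelFork.ofι (kerι f) (kerι_comp f)) :=
  KernelFork.IsLimit.ofι _ _
    (fun {W} g hg => {
      fa := kernel.lift f.fa g.fa (by
        rw [← comp_fa, hg, zero_fa])
      fb := kernel.lift f.fb g.fb (by
        rw [← comp_fb, hg, zero_fb])
      comm_m := by
        dsimp only [kerObj]; rw [← cancel_mono (kernel.ι f.fb), Category.assoc, Category.assoc]
        show F.map _ ≫ (kerObj f).m ≫ _ = _
        erw [show (kerObj f).m ≫ kernel.ι f.fb = F.map (kernel.ι f.fa) ≫ X.m from
          kerM_ι f, ← Category.assoc, ← F.map_comp, kernel.lift_ι, kernel.lift_ι]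
        exact g.comm_m
      comm_n := by
        have hmono : Mono (G.map (kernel.ι f.fa)) := inferInstance
        erw [← cancel_mono (G.map (kernel.ι f.fa)), Category.assoc, Category.assoc,
          show (kerObj f).n ≫ G.map (kernel.ι f.fa) = kernel.ι f.fb ≫ X.n from
            kerN_ι f, ← G.map_comp, kernel.lift_ι, ← Category.assoc, kernel.lift_ι]
        exact g.comm_n })
    (fun {W} g hg => by
      apply MVHom.ext
      · exact kernel.lift_ι _ _ _
      · exact kernel.lift_ι _ _ _)
    (fun {W} g hg mor hm => by
      apply MVHom.ext
      · erw [← cancel_mono (kernel.ι f.fa), kernel.lift_ι]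
        exact congrArg MVHom.fa hm
      · erw [← cancel_mono (kernel.ι f.fb), kernel.lift_ι]
        exact congrArg MVHom.fb hm)

instance : HasKernels (MVObj F G T) where
  has_limit f := HasLimit.mk ⟨_, kerIsLimit f⟩

noncomputable def cokerM (f : X ⟶ Y) : F.obj (cokernel f.fa) ⟶ cokernel f.fb :=
  inv (cokernelComparison f.fa F) ≫
    cokernel.desc (F.map f.fa) (Y.m ≫ cokernel.π f.fb) (by
      rw [← Category.assoc, f.comm_m, Category.assoc, cokernel.condition, comp_zero])

noncomputable def cokerN (f : X ⟶ Y) : cokernel f.fb ⟶ G.obj (cokernel f.fa) :=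
  cokernel.desc f.fb (Y.n ≫ G.map (cokernel.π f.fa)) (by
    rw [← Category.assoc, ← f.comm_n, Category.assoc, ← G.map_comp, cokernel.condition,
      G.map_zero, comp_zero])

lemma π_cokerM (f : X ⟶ Y) :
    F.map (cokernel.π f.fa) ≫ cokerM f = Y.m ≫ cokernel.π f.fb := by
  simp only [cokerM, ← Category.assoc, map_π_comp_inv_cokernelComparison]
  rw [cokernel.π_desc]

lemma π_cokerN (f : X ⟶ Y) :
    cokernel.π f.fb ≫ cokerN f = Y.n ≫ G.map (cokernel.π f.fa) :=
  cokernel.π_desc _ _ _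

/-- Cokernel object of an MV morphism. -/
noncomputable def cokerObj (f : X ⟶ Y) : MVObj F G T where
  a := cokernel f.fa
  b := cokernel f.fb
  m := cokerM f
  n := cokerN f
  fac := by
    have hepi : Epi (F.map (cokernel.π f.fa)) := inferInstance
    rw [← cancel_epi (F.map (cokernel.π f.fa)), ← Category.assoc, π_cokerM,
      Category.assoc, π_cokerN, ← Category.assoc, Y.fac, T.naturality]

/-- The cokernel projection. -/
noncomputable def cokerπ (f : X ⟶ Y) : Y ⟶ cokerObj f where
  fa := cokernel.π f.fa
  fb := cokernel.π f.fb
  comm_m := π_cokerM f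
  comm_n := (π_cokerN f).symm

lemma comp_cokerπ (f : X ⟶ Y) : f ≫ cokerπ f = 0 := by
  apply MVHom.ext
  · exact cokernel.condition f.fa
  · exact cokernel.condition f.fb

/-- The cokernel cofork is a colimit. -/
noncomputable def cokerIsColimit (f : X ⟶ Y) :
    IsColimit (CokernelCofork.ofπ (cokerπ f) (comp_cokerπ f)) :=
  CokernelCofork.IsColimit.ofπ _ _
    (fun {W} g hg => {
      fa := cokernel.desc f.fa g.fa (by
        have := congrArg MVHom.fa hg; simpa using this)
      fb := cokernel.desc f.fb g.fb (by
        have := congrArg MVHom.fb hg; simpa using this)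
      comm_m := by
        have hepi : Epi (F.map (cokernel.π f.fa)) := inferInstance
        erw [← cancel_epi (F.map (cokernel.π f.fa)), ← Category.assoc, ← F.map_comp,
          cokernel.π_desc, ← Category.assoc]
        show _ = (F.map (cokernel.π f.fa) ≫ (cokerObj f).m) ≫ _
        erw [show F.map (cokernel.π f.fa) ≫ (cokerObj f).m = Y.m ≫ cokernel.π f.fb from
          π_cokerM f, Category.assoc, cokernel.π_desc]
        exact g.comm_m
      comm_n := by
        erw [← cancel_epi (cokernel.π f.fb), ← Category.assoc]
        show (cokernel.π f.fb ≫ (cokerObj f).n) ≫ _ = _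
        erw [show cokernel.π f.fb ≫ (cokerObj f).n = Y.n ≫ G.map (cokernel.π f.fa) from
          π_cokerN f, Category.assoc, ← G.map_comp, cokernel.π_desc, ← Category.assoc,
          cokernel.π_desc]
        exact g.comm_n })
    (fun {W} g hg => by
      apply MVHom.ext
      · exact cokernel.π_desc _ _ _
      · exact cokernel.π_desc _ _ _)
    (fun {W} g hg mor hm => by
      apply MVHom.ext
      · erw [← cancel_epi (cokernel.π f.fa), cokernel.π_desc]
        exact congrArg MVHom.fa hm
      · erw [← cancel_epi (cokernel.π f.fb), cokernel.π_desc]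
        exact congrArg MVHom.fb hm)

instance : HasCokernels (MVObj F G T) where
  has_colimit f := HasColimit.mk ⟨_, cokerIsColimit f⟩

end KerCoker


section Normal

variable [PreservesFiniteColimits F] [PreservesFiniteLimits G]
variable {X Y : MVObj F G T}

lemma kerι_eq_zero (f : X ⟶ Y) [Mono f] : kerι f = 0 := by
  rw [← cancel_mono f, kerι_comp, zero_comp]

lemma mono_fa (f : X ⟶ Y) [Mono f] : Mono f.fa :=
  Preadditive.mono_of_kernel_zero (congrArg MVHom.fa (kerι_eq_zero f))

lemma mono_fb (f : X ⟶ Y) [Mono f] : Mono f.fb :=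
  Preadditive.mono_of_kernel_zero (congrArg MVHom.fb (kerι_eq_zero f))

lemma cokerπ_eq_zero (f : X ⟶ Y) [Epi f] : cokerπ f = 0 := by
  rw [← cancel_epi f, comp_cokerπ, comp_zero]

lemma epi_fa (f : X ⟶ Y) [Epi f] : Epi f.fa :=
  Preadditive.epi_of_cokernel_zero (congrArg MVHom.fa (cokerπ_eq_zero f))

lemma epi_fb (f : X ⟶ Y) [Epi f] : Epi f.fb :=
  Preadditive.epi_of_cokernel_zero (congrArg MVHom.fb (cokerπ_eq_zero f))

noncomputable instance : IsNormalMonoCategory (MVObj F G T) where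
  normalMonoOfMono {X Y} f _inst := ⟨
    haveI := mono_fa f
    haveI := mono_fb f
    { Z := cokerObj f
      g := cokerπ f
      w := comp_cokerπ f
      isLimit := KernelFork.IsLimit.ofι _ _
        (fun {W} g' hg' => {
          fa := Abelian.monoLift f.fa g'.fa (congrArg MVHom.fa hg')
          fb := Abelian.monoLift f.fb g'.fb (congrArg MVHom.fb hg')
          comm_m := by
            erw [← cancel_mono f.fb, Category.assoc, Category.assoc, ← f.comm_m,
              Abelian.monoLift_comp, ← Category.assoc, ← F.map_comp,
              Abelian.monoLift_comp]
            exact g'.comm_m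
          comm_n := by
            haveI : Mono (G.map f.fa) := inferInstance
            erw [← cancel_mono (G.map f.fa), Category.assoc, Category.assoc,
              ← G.map_comp, Abelian.monoLift_comp, f.comm_n, ← Category.assoc,
              Abelian.monoLift_comp]
            exact g'.comm_n })
        (fun {W} g' hg' => by
          apply MVHom.ext
          · exact Abelian.monoLift_comp _ _ _
          · exact Abelian.monoLift_comp _ _ _)
        (fun {W} g' hg' mor hmor => by
          apply MVHom.ext
          · erw [← cancel_mono f.fa, Abelian.monoLift_comp]
            exact congrArg MVHom.fa hmor
          · erw [← cancel_mono f.fb, Abelian.monoLift_comp]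
            exact congrArg MVHom.fb hmor) }⟩

noncomputable instance : IsNormalEpiCategory (MVObj F G T) where
  normalEpiOfEpi {X Y} f _inst := ⟨
    haveI := epi_fa f
    haveI := epi_fb f
    { W := kerObj f
      g := kerι f
      w := kerι_comp f
      isColimit := CokernelCofork.IsColimit.ofπ _ _
        (fun {Z'} h hh => {
          fa := Abelian.epiDesc f.fa h.fa (congrArg MVHom.fa hh)
          fb := Abelian.epiDesc f.fb h.fb (congrArg MVHom.fb hh)
          comm_m := by
            haveI : Epi (F.map f.fa) := inferInstance
            erw [← cancel_epi (F.map f.fa), ← Category.assoc, ← F.map_comp,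
              Abelian.comp_epiDesc, ← Category.assoc, f.comm_m, Category.assoc,
              Abelian.comp_epiDesc]
            exact h.comm_m
          comm_n := by
            erw [← cancel_epi f.fb, ← Category.assoc, ← f.comm_n, Category.assoc,
              ← G.map_comp, Abelian.comp_epiDesc, ← Category.assoc,
              Abelian.comp_epiDesc]
            exact h.comm_n })
        (fun {Z'} h hh => by
          apply MVHom.ext
          · exact Abelian.comp_epiDesc _ _ _
          · exact Abelian.comp_epiDesc _ _ _)
        (fun {Z'} h hh mor hmor => by
          apply MVHom.ext
          · erw [← cancel_epi f.fa, Abelian.comp_epiDesc]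
            exact congrArg MVHom.fa hmor
          · erw [← cancel_epi f.fb, Abelian.comp_epiDesc]
            exact congrArg MVHom.fb hmor) }⟩

noncomputable instance mvAbelian : Abelian (MVObj F G T) where
  toPreadditive := inferInstance
  toIsNormalMonoCategory := inferInstance
  toIsNormalEpiCategory := inferInstance

end Normal

end Abelian

end MV

/-- **MacPherson–Vilonen.** Let `A`, `B` be abelian categories,
`F : A ⥤ B` a right exact additive functor, `G : A ⥤ B` a left exact additive
functor, and `T : F ⟶ G` a natural transformation.  Then the category `C(F,G,T)`
of quadruples `(A, B, m : F A ⟶ B, n : B ⟶ G A)` with `n ∘ m = T_A` is abelian. -/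
theorem stmt_0 [Abelian A] [Abelian B] (F G : A ⥤ B) [F.Additive] [G.Additive]
    [PreservesFiniteColimits F] [PreservesFiniteLimits G] (T : F ⟶ G) :
    Nonempty (Abelian (MVObj F G T)) :=
  ⟨MV.mvAbelian⟩
end

section
/- Let K be a pretriangulated category with shift functor T. Given two distinguished triangles A →u B →v C →w T(A) and A' →u' B' →v' C' →w' T(A'), and morphisms β : B → B', γ : C → C' with v' ∘ β = γ ∘ v, there exists a morphism α : A → A' such that (α, β, γ) is a morphism of triangles. If moreover Hom_K(B, T⁻¹(C')) = 0 and Hom_K(C, B') = 0, then this morphism α is unique. -/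
open CategoryTheory CategoryTheory.Limits CategoryTheory.Pretriangulated

universe v u

lemma aux_zero {K : Type u} [Category.{v} K] [HasZeroObject K] [HasShift K ℤ]
    [Preadditive K] [∀ n : ℤ, (shiftFunctor K n).Additive] [Pretriangulated K]
    (T₁ T₂ : Triangle K) (hT₁ : T₁ ∈ distTriang K) (hT₂ : T₂ ∈ distTriang K)
    (H1 : ∀ f : T₁.obj₂ ⟶ T₂.obj₃⟦(-1 : ℤ)⟧, f = 0)
    (H2 : ∀ f : T₁.obj₃ ⟶ T₂.obj₂, f = 0)
    (δ : T₁.obj₁ ⟶ T₂.obj₁) (h1 : δ ≫ T₂.mor₁ = 0)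
    (h2 : T₁.mor₃ ≫ δ⟦(1 : ℤ)⟧' = 0) : δ = 0 := by
  obtain ⟨g, hg⟩ := Triangle.yoneda_exact₂ _
    (rot_of_distTriang _ (rot_of_distTriang _ hT₁)) (δ⟦(1 : ℤ)⟧') h2
  set h : T₁.obj₂ ⟶ T₂.obj₁ := (shiftFunctor K (1 : ℤ)).preimage g with hh
  have hg' : g = h⟦(1 : ℤ)⟧' := ((shiftFunctor K (1 : ℤ)).map_preimage g).symm
  have hδ : δ = -(T₁.mor₁ ≫ h) := by
    apply (shiftFunctor K (1 : ℤ)).map_injective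
    rw [hg, hg']
    simp [Triangle.rotate]
    exact Preadditive.neg_comp _ _
  -- h ≫ T₂.mor₁ = 0
  have huh : T₁.mor₁ ≫ (h ≫ T₂.mor₁) = 0 := by
    have := h1
    rw [hδ] at this
    simpa using this
  obtain ⟨k, hk⟩ := Triangle.yoneda_exact₂ _ hT₁ (h ≫ T₂.mor₁) huh
  have hk0 : h ≫ T₂.mor₁ = 0 := by rw [hk, H2 k, comp_zero]
  obtain ⟨m, hm⟩ := Triangle.coyoneda_exact₂ _ (inv_rot_of_distTriang _ hT₂) h hk0
  have hm0 : h = 0 := by rw [hm, H1 m]; exact zero_comp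
  rw [hδ, hm0, comp_zero, neg_zero]

/-- In a pretriangulated category `K` with shift `T = ⟦1⟧`, given
distinguished triangles `A → B → C → T A` and `A' → B' → C' → T A'` and morphisms
`β : B ⟶ B'`, `γ : C ⟶ C'` with `v' ∘ β = γ ∘ v`, there is a morphism `α : A ⟶ A'`
making `(α, β, γ)` a morphism of triangles; and if moreover `Hom(B, T⁻¹ C') = 0`
and `Hom(C, B') = 0`, this `α` is unique. -/
theorem stmt_1 {K : Type u} [Category.{v} K] [HasZeroObject K] [HasShift K ℤ]
    [Preadditive K] [∀ n : ℤ, (shiftFunctor K n).Additive] [Pretriangulated K]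
    (T₁ T₂ : Triangle K) (hT₁ : T₁ ∈ distTriang K) (hT₂ : T₂ ∈ distTriang K)
    (β : T₁.obj₂ ⟶ T₂.obj₂) (γ : T₁.obj₃ ⟶ T₂.obj₃)
    (hcomm : T₁.mor₂ ≫ γ = β ≫ T₂.mor₂) :
    (∃ α : T₁.obj₁ ⟶ T₂.obj₁,
        T₁.mor₁ ≫ β = α ≫ T₂.mor₁ ∧ T₁.mor₃ ≫ α⟦(1 : ℤ)⟧' = γ ≫ T₂.mor₃) ∧
    ((∀ f : T₁.obj₂ ⟶ T₂.obj₃⟦(-1 : ℤ)⟧, f = 0) →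
      (∀ f : T₁.obj₃ ⟶ T₂.obj₂, f = 0) →
      ∃! α : T₁.obj₁ ⟶ T₂.obj₁,
        T₁.mor₁ ≫ β = α ≫ T₂.mor₁ ∧ T₁.mor₃ ≫ α⟦(1 : ℤ)⟧' = γ ≫ T₂.mor₃) := by
  obtain ⟨α, hα₁, hα₂⟩ :=
    complete_distinguished_triangle_morphism₁ T₁ T₂ hT₁ hT₂ β γ hcomm
  refine ⟨⟨α, hα₁, hα₂⟩, fun H1 H2 => ⟨α, ⟨hα₁, hα₂⟩, fun α' ⟨hα'₁, hα'₂⟩ => ?_⟩⟩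
  have h1 : (α' - α) ≫ T₂.mor₁ = 0 := by
    rw [Preadditive.sub_comp, ← hα₁, ← hα'₁, sub_self]
  have h2 : T₁.mor₃ ≫ (α' - α)⟦(1 : ℤ)⟧' = 0 := by
    rw [Functor.map_sub, Preadditive.comp_sub, hα₂, hα'₂, sub_self]
  have := aux_zero T₁ T₂ hT₁ hT₂ H1 H2 (α' - α) h1 h2
  rw [← sub_eq_zero]
  exact this
end

section
/- Let X be a topological space, U ⊆ X an open subset with open embedding j : U → X, and Z = X \ U with closed embedding i : Z → X. For any sheaf F (of sets, or of modules) on X, the commutative square with vertices F, i_*i⁻¹F, j_*j⁻¹F, i_*i⁻¹j_*j⁻¹F, formed by the unit maps F → i_*i⁻¹F, F → j_*j⁻¹F and by i_*i⁻¹ applied to the unit F → j_*j⁻¹F, is a pullback (cartesian) square. -/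
open CategoryTheory TopologicalSpace TopCat Limits Opposite
open scoped AlgebraicGeometry

universe w

-- naturality of stalkPushforward
lemma aux_stalkPushforward_natural {X Y : TopCat.{w}} (f : X ⟶ Y) {F G : X.Presheaf (Type w)}
    (φ : F ⟶ G) (x : X) :
    (Presheaf.stalkFunctor (Type w) (f x)).map ((Presheaf.pushforward (Type w) f).map φ) ≫
        G.stalkPushforward _ f x =
      F.stalkPushforward _ f x ≫ (Presheaf.stalkFunctor (Type w) x).map φ := by
  apply Presheaf.stalk_hom_ext
  intro U hxU
  erw [Presheaf.stalkFunctor_map_germ_assoc, Presheaf.stalkPushforward_germ,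
    Presheaf.stalkPushforward_germ_assoc, Presheaf.stalkFunctor_map_germ]
  rfl

-- presheaf-level unit stalk iso
lemma aux_stalk_presheaf_unit_isIso {X Y : TopCat.{w}} {f : X ⟶ Y} (hf : Topology.IsInducing f)
    (F : Y.Presheaf (Type w)) (x : X) :
    IsIso ((Presheaf.stalkFunctor (Type w) (f x)).map
      ((Presheaf.pushforwardPullbackAdjunction (Type w) f).unit.app F)) := by
  haveI h1 : IsIso (Presheaf.stalkPullbackHom (Type w) f F x) :=
    (Presheaf.stalkPullbackIso (Type w) f F x).isIso_hom
  haveI h2 := Presheaf.stalkPushforward.stalkPushforward_iso_of_isInducing (C := Type w) hf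
    ((Presheaf.pullback (Type w) f).obj F) x
  haveI h1' : IsIso ((Presheaf.stalkFunctor (Type w) (f x)).map
      ((Presheaf.pushforwardPullbackAdjunction (Type w) f).unit.app F) ≫
      Presheaf.stalkPushforward (Type w) f ((Presheaf.pullback (Type w) f).obj F) x) := h1
  exact @IsIso.of_isIso_comp_right _ _ _ _ _ _ _ h2 h1'

lemma aux_stalk_toSheafify_isIso {X : TopCat.{w}} (x : X) (P : X.Presheaf (Type w)) :
    IsIso ((Presheaf.stalkFunctor (Type w) x).map
      ((sheafificationAdjunction (Opens.grothendieckTopology X) (Type w)).unit.app P)) := by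
  exact TopCat.Presheaf.stalkFunctor_map_unit_toSheafify_isIso x (Type w) P

lemma aux_stalk_sheaf_unit_isIso {W X : TopCat.{w}} {f : W ⟶ X} (hf : Topology.IsInducing f)
    (F : TopCat.Sheaf (Type w) X) (z : W) :
    IsIso ((Presheaf.stalkFunctor (Type w) (f z)).map
      (((Sheaf.pullbackPushforwardAdjunction (Type w) f).unit.app F).hom)) := by
  let adjC := Functor.sheafPullbackConstruction.sheafAdjunctionContinuous (Opens.map f) (Type w)
    (Opens.grothendieckTopology X) (Opens.grothendieckTopology W)
  suffices hC : IsIso ((Presheaf.stalkFunctor (Type w) (f z)).map ((adjC.unit.app F).hom)) by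
    have e := Adjunction.unit_leftAdjointUniq_hom_app
      (Sheaf.pullbackPushforwardAdjunction (Type w) f) adjC F
    have e2 : (Presheaf.stalkFunctor (Type w) (f z)).map
          (((Sheaf.pullbackPushforwardAdjunction (Type w) f).unit.app F).hom) ≫
        (Presheaf.stalkFunctor (Type w) (f z)).map
          (((Sheaf.pushforward (Type w) f).map
            ((Adjunction.leftAdjointUniq (Sheaf.pullbackPushforwardAdjunction (Type w) f)
              adjC).hom.app F)).hom) =
        (Presheaf.stalkFunctor (Type w) (f z)).map ((adjC.unit.app F).hom) := by
      rw [← Functor.map_comp]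
      exact congrArg (fun k => (Presheaf.stalkFunctor (Type w) (f z)).map k.hom) e
    haveI : IsIso ((Presheaf.stalkFunctor (Type w) (f z)).map
          (((Sheaf.pushforward (Type w) f).map
            ((Adjunction.leftAdjointUniq (Sheaf.pullbackPushforwardAdjunction (Type w) f)
              adjC).hom.app F)).hom)) := by
      exact ((Sheaf.pushforward (Type w) f ⋙ sheafToPresheaf _ _ ⋙
        Presheaf.stalkFunctor (Type w) (f z)).mapIso
          ((Adjunction.leftAdjointUniq _ adjC).app F)).isIso_hom
    exact @IsIso.of_isIso_fac_right _ _ _ _ _ _ _ _ this hC e2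
  have hval : (adjC.unit.app F).hom =
      (Presheaf.pushforwardPullbackAdjunction (Type w) f).unit.app F.val ≫
        (Presheaf.pushforward (Type w) f).map
          ((sheafificationAdjunction (Opens.grothendieckTopology W) (Type w)).unit.app
            ((Presheaf.pullback (Type w) f).obj F.val)) := by
    have h := Adjunction.map_restrictFullyFaithful_unit_app
      (adj := ((Opens.map f).op.lanAdjunction (Type w)).comp
        (sheafificationAdjunction (Opens.grothendieckTopology W) (Type w)))
      (L := Functor.sheafPullbackConstruction.sheafPullback (Opens.map f) (Type w) (Opens.grothendieckTopology X)
        (Opens.grothendieckTopology W))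
      (R := (Opens.map f).sheafPushforwardContinuous (Type w) (Opens.grothendieckTopology X)
        (Opens.grothendieckTopology W))
      (fullyFaithfulSheafToPresheaf (Opens.grothendieckTopology X) (Type w))
      (Functor.FullyFaithful.id _) (Iso.refl _) (Iso.refl _) F
    have h' : (adjC.unit.app F).hom =
        (((Opens.map f).op.lanAdjunction (Type w)).comp
          (sheafificationAdjunction (Opens.grothendieckTopology W) (Type w))).unit.app F.val ≫
        _ ≫ _ := h
    rw [h']
    simp [Adjunction.comp_unit_app]
    rfl
  refine (congrArg IsIso ((congrArg (Presheaf.stalkFunctor (Type w) (f z)).map hval).trans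
    (Functor.map_comp _ _ _))).mpr ?_
  haveI i1 := aux_stalk_presheaf_unit_isIso hf F.val z
  have hnat := aux_stalkPushforward_natural f
    (show (Presheaf.pullback (Type w) f).obj F.val ⟶
        (presheafToSheaf (Opens.grothendieckTopology W) (Type w) ⋙
          sheafToPresheaf (Opens.grothendieckTopology W) (Type w)).obj
            ((Presheaf.pullback (Type w) f).obj F.val) from
      (sheafificationAdjunction (Opens.grothendieckTopology W) (Type w)).unit.app
        ((Presheaf.pullback (Type w) f).obj F.val)) z
  haveI i2 := aux_stalk_toSheafify_isIso z ((Presheaf.pullback (Type w) f).obj F.val)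
  haveI i3 := Presheaf.stalkPushforward.stalkPushforward_iso_of_isInducing (C := Type w) hf
    ((Presheaf.pullback (Type w) f).obj F.val) z
  haveI i4 := Presheaf.stalkPushforward.stalkPushforward_iso_of_isInducing (C := Type w) hf
    ((presheafToSheaf (Opens.grothendieckTopology W) (Type w) ⋙
      sheafToPresheaf (Opens.grothendieckTopology W) (Type w)).obj
        ((Presheaf.pullback (Type w) f).obj F.val)) z
  haveI i5 : IsIso ((Presheaf.stalkFunctor (Type w) (f z)).map
      ((Presheaf.pushforward (Type w) f).map
        ((sheafificationAdjunction (Opens.grothendieckTopology W) (Type w)).unit.app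
          ((Presheaf.pullback (Type w) f).obj F.val)))) := by
    haveI : IsIso (Presheaf.stalkPushforward (Type w) f ((Presheaf.pullback (Type w) f).obj F.val) z ≫
        (Presheaf.stalkFunctor (Type w) z).map
          ((sheafificationAdjunction (Opens.grothendieckTopology W) (Type w)).unit.app
            ((Presheaf.pullback (Type w) f).obj F.val))) := IsIso.comp_isIso' i3 i2
    exact @IsIso.of_isIso_fac_right _ _ _ _ _ _ _ _ i4 this hnat
  exact IsIso.comp_isIso' i1 i5

lemma aux_pushforward_stalk_singleton {Z X : TopCat.{w}} (i : Z ⟶ X) (U : Opens X)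
    (hU : ∀ z : Z, i z ∉ U) (x : X) (hx : x ∈ U) (G : TopCat.Sheaf (Type w) Z) :
    Subsingleton ((i _* G.val).stalk x) ∧ Nonempty ((i _* G.val).stalk x) := by
  have hbot : ∀ (V : Opens X), V ≤ U → (Opens.map i).obj V = ⊥ := by
    intro V hV
    ext z
    simp only [Opens.map, Opens.coe_mk, Set.mem_preimage, Opens.coe_bot, Set.mem_empty_iff_false,
      iff_false]
    exact fun hz => hU z (hV hz)
  have huniq : ∀ (V : Opens X), V ≤ U → Unique (G.val.obj (op ((Opens.map i).obj V))) := by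
    intro V hV
    exact (Types.isTerminalEquivUnique _) (G.isTerminalOfEqEmpty (hbot V hV))
  constructor
  · constructor
    intro a b
    obtain ⟨V₁, h₁, s₁, rfl⟩ := TopCat.Presheaf.germ_exist (i _* G.val) (x := x) a
    obtain ⟨V₂, h₂, s₂, rfl⟩ := TopCat.Presheaf.germ_exist (i _* G.val) (x := x) b
    have hW : x ∈ (V₁ ⊓ V₂ ⊓ U) := ⟨⟨h₁, h₂⟩, hx⟩
    have e₁ := TopCat.Presheaf.germ_res_apply (i _* G.val)
      (homOfLE (inf_le_left.trans inf_le_left) : (V₁ ⊓ V₂ ⊓ U) ⟶ V₁) x hW s₁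
    have e₂ := TopCat.Presheaf.germ_res_apply (i _* G.val)
      (homOfLE (inf_le_left.trans inf_le_right) : (V₁ ⊓ V₂ ⊓ U) ⟶ V₂) x hW s₂
    rw [← e₁, ← e₂]
    congr 1
    letI : Unique ((forget (Type w)).obj
        (((Presheaf.pushforward (Type w) i).obj G.val).obj (op (V₁ ⊓ V₂ ⊓ U)))) :=
      huniq (V₁ ⊓ V₂ ⊓ U) inf_le_right
    exact Subsingleton.elim _ _
  · letI : Unique (((Presheaf.pushforward (Type w) i).obj G.val).obj (op U)) := huniq U le_rfl
    exact ⟨(i _* G.val).germ U x hx default⟩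

lemma aux_isIso_of_singleton {T₁ T₂ : Type w} (φ : T₁ ⟶ T₂)
    (h₁ : Subsingleton T₁) (h₂ : Nonempty T₁) (h₃ : Subsingleton T₂) : IsIso φ := by
  rw [CategoryTheory.isIso_iff_bijective]
  obtain ⟨a⟩ := h₂
  exact ⟨fun u v _ => Subsingleton.elim u v, fun b => ⟨a, Subsingleton.elim _ _⟩⟩

/-- Let `X` be a topological space, `U ⊆ X` open with open
inclusion `j`, and `Z = X \\ U` with closed embedding `i`.  For every sheaf `F`
on `X`, the square formed by the unit maps `F ⟶ i_*i⁻¹F`, `F ⟶ j_*j⁻¹F` and by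
`i_*i⁻¹` applied to the unit `F ⟶ j_*j⁻¹F` is a pullback (cartesian) square. -/
theorem stmt_2 {X : TopCat.{w}} (U : Opens X) {Z : TopCat.{w}} (i : Z ⟶ X)
    (hi : Topology.IsClosedEmbedding i) (hrange : Set.range i = (U : Set X)ᶜ)
    (F : TopCat.Sheaf (Type w) X) :
    IsPullback
      ((Sheaf.pullbackPushforwardAdjunction (Type w) i).unit.app F)
      ((Sheaf.pullbackPushforwardAdjunction (Type w) U.inclusion').unit.app F)
      ((Sheaf.pullback (Type w) i ⋙ Sheaf.pushforward (Type w) i).map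
        ((Sheaf.pullbackPushforwardAdjunction (Type w) U.inclusion').unit.app F))
      ((Sheaf.pullbackPushforwardAdjunction (Type w) i).unit.app
        ((Sheaf.pullback (Type w) U.inclusion' ⋙
          Sheaf.pushforward (Type w) U.inclusion').obj F)) := by
  classical
  have hU : ∀ z : Z, i z ∉ U := by
    intro z hz
    have : i z ∈ Set.range i := ⟨z, rfl⟩
    rw [hrange] at this
    exact this hz
  set Gj := (Sheaf.pullback (Type w) U.inclusion' ⋙
    Sheaf.pushforward (Type w) U.inclusion').obj F with hGj
  set fst := (Sheaf.pullbackPushforwardAdjunction (Type w) i).unit.app F with hfst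
  set snd := (Sheaf.pullbackPushforwardAdjunction (Type w) U.inclusion').unit.app F with hsnd
  set ff := (Sheaf.pullback (Type w) i ⋙ Sheaf.pushforward (Type w) i).map
    ((Sheaf.pullbackPushforwardAdjunction (Type w) U.inclusion').unit.app F) with hff
  set gg := (Sheaf.pullbackPushforwardAdjunction (Type w) i).unit.app Gj with hgg
  have comm : fst ≫ ff = snd ≫ gg := by
    have h := ((Sheaf.pullbackPushforwardAdjunction (Type w) i).unit.naturality
      ((Sheaf.pullbackPushforwardAdjunction (Type w) U.inclusion').unit.app F)).symm
    show fst ≫ ff = snd ≫ (Sheaf.pullbackPushforwardAdjunction (Type w) i).unit.app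
      ((Sheaf.pullback (Type w) U.inclusion' ⋙ Sheaf.pushforward (Type w) U.inclusion').obj F)
    simpa only [Functor.id_map, Functor.id_obj] using h
  have key : ∀ x : X, IsPullback
      ((Presheaf.stalkFunctor (Type w) x).map fst.hom)
      ((Presheaf.stalkFunctor (Type w) x).map snd.hom)
      ((Presheaf.stalkFunctor (Type w) x).map ff.hom)
      ((Presheaf.stalkFunctor (Type w) x).map gg.hom) := by
    intro x
    have commx : CommSq ((Presheaf.stalkFunctor (Type w) x).map fst.hom)
        ((Presheaf.stalkFunctor (Type w) x).map snd.hom)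
        ((Presheaf.stalkFunctor (Type w) x).map ff.hom)
        ((Presheaf.stalkFunctor (Type w) x).map gg.hom) := by
      constructor
      rw [← Functor.map_comp, ← Functor.map_comp]
      congr 1
      exact congrArg InducedCategory.Hom.hom comm
    by_cases hx : x ∈ U
    · haveI hsndI : IsIso ((Presheaf.stalkFunctor (Type w) x).map snd.hom) :=
        aux_stalk_sheaf_unit_isIso
          (Opens.isOpenEmbedding U).toIsEmbedding.toIsInducing F (⟨x, hx⟩ : U)
      haveI hffI : IsIso ((Presheaf.stalkFunctor (Type w) x).map ff.hom) := by
        obtain ⟨hs, hn⟩ := aux_pushforward_stalk_singleton i U hU x hx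
          ((Sheaf.pullback (Type w) i).obj F)
        obtain ⟨hs', _⟩ := aux_pushforward_stalk_singleton i U hU x hx
          ((Sheaf.pullback (Type w) i).obj Gj)
        exact aux_isIso_of_singleton _ hs hn hs'
      exact IsPullback.of_vert_isIso commx
    · have hxr : x ∈ Set.range i := by rw [hrange]; exact hx
      obtain ⟨z, rfl⟩ := hxr
      haveI : IsIso ((Presheaf.stalkFunctor (Type w) (i z)).map fst.hom) :=
        aux_stalk_sheaf_unit_isIso hi.toIsEmbedding.toIsInducing F z
      haveI : IsIso ((Presheaf.stalkFunctor (Type w) (i z)).map gg.hom) :=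
        aux_stalk_sheaf_unit_isIso hi.toIsEmbedding.toIsInducing Gj z
      exact IsPullback.of_horiz_isIso commx
  let c : F ⟶ pullback ff gg := pullback.lift fst snd comm
  haveI : IsIso c := by
    haveI : ∀ (x : X), IsIso ((Presheaf.stalkFunctor (Type w) x).map c.hom) := by
      intro x
      let Φ : TopCat.Sheaf (Type w) X ⥤ Type w :=
        Sheaf.forget (Type w) X ⋙ Presheaf.stalkFunctor (Type w) x
      haveI hpfl : PreservesFiniteLimits (Presheaf.stalkFunctor (Type w) x) := by
        have h2 : PreservesFiniteLimits
            ((Functor.whiskeringLeft _ _ (Type w)).obj (OpenNhds.inclusion x).op ⋙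
              (colim : ((OpenNhds x)ᵒᵖ ⥤ Type w) ⥤ Type w)) := by
          have hwl : PreservesFiniteLimits
              ((Functor.whiskeringLeft (OpenNhds x)ᵒᵖ (Opens X)ᵒᵖ (Type w)).obj
                (OpenNhds.inclusion x).op) :=
            ⟨fun _ => inferInstance⟩
          have hcol : PreservesFiniteLimits (colim : ((OpenNhds x)ᵒᵖ ⥤ Type w) ⥤ Type w) :=
            inferInstance
          exact comp_preservesFiniteLimits _ _
        exact h2
      haveI : PreservesFiniteLimits (Sheaf.forget (Type w) X) :=
        ⟨fun _ => inferInstance⟩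
      haveI : PreservesFiniteLimits Φ := comp_preservesFiniteLimits _ _
      haveI : PreservesLimit (cospan ff gg) Φ := inferInstance
      have hP := IsPullback.of_hasPullback ff gg
      have hPx := hP.map Φ
      have hSx : IsPullback (Φ.map fst) (Φ.map snd) (Φ.map ff) (Φ.map gg) := key x
      have hc : Φ.map c = (hSx.isoIsPullback _ _ hPx).hom := by
        apply hPx.hom_ext
        · rw [← Functor.map_comp]
          show Φ.map (c ≫ pullback.fst ff gg) = _
          rw [pullback.lift_fst]
          exact (IsPullback.isoIsPullback_hom_fst _ _ hSx hPx).symm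
        · rw [← Functor.map_comp]
          show Φ.map (c ≫ pullback.snd ff gg) = _
          rw [pullback.lift_snd]
          exact (IsPullback.isoIsPullback_hom_snd _ _ hSx hPx).symm
      show IsIso (Φ.map c)
      rw [hc]
      infer_instance
    exact TopCat.Presheaf.isIso_of_stalkFunctor_map_iso c
  exact IsPullback.of_iso_pullback ⟨comm⟩ (asIso c) (pullback.lift_fst _ _ _)
    (pullback.lift_snd _ _ _)
end

section
/- Let σ ⊆ ℝⁿ be a rational convex polyhedral cone (generated by finitely many vectors in ℤⁿ). Then the monoid σ̌ ∩ ℤⁿ, where σ̌ is the dual cone of σ, is finitely generated. -/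
open scoped BigOperators

/-- A submonoid of `ι → ℕ` (`ι` finite) which is closed under subtraction of smaller
elements is finitely generated, with generators being the minimal nonzero elements
(Dickson's lemma). -/
lemma gordan_aux {ι : Type*} [Fintype ι] (N : AddSubmonoid (ι → ℕ))
    (hsub : ∀ x ∈ N, ∀ y ∈ N, y ≤ x → x - y ∈ N) :
    ∃ s : Finset (ι → ℕ), AddSubmonoid.closure (s : Set (ι → ℕ)) = N := by
  classical
  set Min : Set (ι → ℕ) :=
    {x | x ∈ N ∧ x ≠ 0 ∧ ∀ y ∈ N, y ≠ 0 → y ≤ x → y = x} with hMin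
  have hanti : IsAntichain (· ≤ ·) Min := by
    intro a ha b hb hne hle
    exact hne (hb.2.2 a ha.1 ha.2.1 hle)
  have hpwo : Set.IsPWO Min := by
    haveI h : ∀ _i : ι, IsWellOrder ℕ (· < ·) := fun _ => inferInstance
    exact Set.isPWO_of_wellQuasiOrderedLE Min
  have hfin : Min.Finite := hanti.finite_of_partiallyWellOrderedOn hpwo
  refine ⟨hfin.toFinset, le_antisymm ?_ ?_⟩
  · rw [AddSubmonoid.closure_le]
    intro x hx
    simp only [Set.Finite.coe_toFinset] at hx
    exact hx.1
  · intro x hx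
    have key : ∀ t : ℕ, ∀ x ∈ N, (∑ j, x j) ≤ t →
        x ∈ AddSubmonoid.closure (hfin.toFinset : Set (ι → ℕ)) := by
      intro t
      induction t with
      | zero =>
        intro x hxN hsum
        have : x = 0 := by
          funext j
          have := Finset.sum_eq_zero_iff.1 (Nat.le_zero.1 hsum) j (Finset.mem_univ j)
          simpa using this
        simpa [this] using (AddSubmonoid.closure _).zero_mem
      | succ t ih =>
        intro x hxN hsum
        by_cases hx0 : x = 0
        · simpa [hx0] using (AddSubmonoid.closure _).zero_mem
        by_cases hmin : ∀ y ∈ N, y ≠ 0 → y ≤ x → y = x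
        · exact AddSubmonoid.subset_closure (by
            simp only [Set.Finite.coe_toFinset]
            exact ⟨hxN, hx0, hmin⟩)
        push_neg at hmin
        obtain ⟨y, hyN, hy0, hyx, hyne⟩ := hmin
        have hylt : ∑ j, y j < ∑ j, x j := by
          obtain ⟨j₀, hj₀⟩ : ∃ j, y j < x j := by
            by_contra h
            push_neg at h
            exact hyne (le_antisymm hyx fun j => h j)
          exact Finset.sum_lt_sum (fun j _ => hyx j) ⟨j₀, Finset.mem_univ j₀, hj₀⟩
        have hxy : x - y ∈ N := hsub x hxN y hyN hyx
        have hsumeq : (∑ j, (x - y) j) + ∑ j, y j = ∑ j, x j := by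
          rw [← Finset.sum_add_distrib]
          refine Finset.sum_congr rfl fun j _ => ?_
          simp only [Pi.sub_apply]
          exact Nat.sub_add_cancel (hyx j)
        have hxpos : 0 < ∑ j, y j := by
          rcases Nat.eq_zero_or_pos (∑ j, y j) with h | h
          · exfalso
            apply hy0
            funext j
            have := Finset.sum_eq_zero_iff.1 h j (Finset.mem_univ j)
            simpa using this
          · exact h
        have h1 : x - y ∈ AddSubmonoid.closure (hfin.toFinset : Set (ι → ℕ)) :=
          ih (x - y) hxy (by omega)
        have h2 : y ∈ AddSubmonoid.closure (hfin.toFinset : Set (ι → ℕ)) :=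
          ih y hyN (by omega)
        have : (x - y) + y = x := by
          funext j
          simp only [Pi.add_apply, Pi.sub_apply]
          exact Nat.sub_add_cancel (hyx j)
        rw [← this]
        exact AddSubmonoid.add_mem _ h1 h2
    exact key (∑ j, x j) x hx le_rfl

/-- **Gordan's lemma.** Let `σ ⊆ ℝⁿ` be a rational convex polyhedral
cone, generated by finitely many integer vectors `v₁, …, v_m`.  Then the monoid
`σ̌ ∩ ℤⁿ` of lattice points of the dual cone is finitely generated: there is a
finite set `s` of lattice points such that an integer vector lies in the dual cone
iff it lies in the additive submonoid generated by `s`. -/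
theorem stmt_8 {n m : ℕ} (v : Fin m → (Fin n → ℤ))
    (σ : Set (Fin n → ℝ))
    (hσ : σ = {x | ∃ c : Fin m → ℝ, (∀ i, 0 ≤ c i) ∧
      x = ∑ i, c i • (fun j => (v i j : ℝ))}) :
    ∃ s : Finset (Fin n → ℤ),
      (∀ u ∈ s, ∀ x ∈ σ, 0 ≤ ∑ j, (u j : ℝ) * x j) ∧
      ∀ u : Fin n → ℤ,
        (∀ x ∈ σ, 0 ≤ ∑ j, (u j : ℝ) * x j) ↔ u ∈ AddSubmonoid.closure (s : Set (Fin n → ℤ)) := by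
  classical
  -- the dual-cone condition over the reals is equivalent to integer inequalities
  have claim1 : ∀ u : Fin n → ℤ,
      (∀ x ∈ σ, 0 ≤ ∑ j, (u j : ℝ) * x j) ↔ (∀ i, (0:ℤ) ≤ ∑ j, u j * v i j) := by
    intro u
    constructor
    · intro h i
      have hvσ : (fun j => (v i j : ℝ)) ∈ σ := by
        rw [hσ]
        refine ⟨fun i' => if i' = i then 1 else 0, fun i' => by positivity, ?_⟩
        funext j
        rw [Finset.sum_apply]
        simp [Pi.smul_apply, ite_smul]
      have := h _ hvσ
      have hcast : (((∑ j, u j * v i j : ℤ)) : ℝ) = ∑ j, (u j : ℝ) * (v i j : ℝ) := by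
        push_cast; ring_nf
      exact_mod_cast hcast ▸ this
    · intro h x hx
      rw [hσ] at hx
      obtain ⟨c, hc, rfl⟩ := hx
      have hxj : ∀ j, (∑ i, c i • (fun j => (v i j : ℝ))) j = ∑ i, c i * (v i j : ℝ) := by
        intro j; rw [Finset.sum_apply]; simp [Pi.smul_apply, smul_eq_mul]
      have key : ∑ j, (u j : ℝ) * (∑ i, c i • (fun j => (v i j : ℝ))) j
          = ∑ i, c i * ((∑ j, u j * v i j : ℤ) : ℝ) := by
        rw [Finset.sum_congr rfl fun j (_ : j ∈ Finset.univ) => by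
          rw [hxj j, Finset.mul_sum]]
        rw [Finset.sum_comm]
        refine Finset.sum_congr rfl fun i _ => ?_
        push_cast
        rw [Finset.mul_sum]
        exact Finset.sum_congr rfl fun j _ => by ring
      rw [key]
      refine Finset.sum_nonneg fun i _ => mul_nonneg (hc i) ?_
      exact_mod_cast h i
  -- encode as a submonoid of ℕ^(n+n+m)
  set ι := (Fin n ⊕ (Fin n ⊕ Fin m)) with hι
  set φ : (ι → ℕ) →+ (Fin n → ℤ) :=
    { toFun := fun x j => (x (Sum.inl j) : ℤ) - (x (Sum.inr (Sum.inl j)) : ℤ)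
      map_zero' := by funext j; simp
      map_add' := by intro a b; funext j; simp only [Pi.add_apply]; push_cast; ring } with hφ
  set N : AddSubmonoid (ι → ℕ) :=
    { carrier := {x | ∀ i, ∑ j, (φ x) j * v i j = (x (Sum.inr (Sum.inr i)) : ℤ)}
      zero_mem' := by intro i; simp [hφ]
      add_mem' := by
        intro a b ha hb i
        have : ∀ j, (φ (a + b)) j * v i j = (φ a) j * v i j + (φ b) j * v i j := by
          intro j
          simp only [map_add, Pi.add_apply]
          ring
        rw [Finset.sum_congr rfl fun j _ => this j, Finset.sum_add_distrib, ha i, hb i]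
        simp only [Pi.add_apply]
        push_cast
        ring } with hN
  have hNsub : ∀ x ∈ N, ∀ y ∈ N, y ≤ x → x - y ∈ N := by
    intro x hx y hy hle i
    have hc : ∀ c : ι, (((x - y) c : ℤ)) = (x c : ℤ) - (y c : ℤ) := by
      intro c
      have h1 : y c ≤ x c := hle c
      simp only [Pi.sub_apply]
      omega
    have hstep : ∀ j, (φ (x - y)) j * v i j = (φ x) j * v i j - (φ y) j * v i j := by
      intro j
      simp only [hφ, AddMonoidHom.coe_mk, ZeroHom.coe_mk, hc]
      ring
    rw [Finset.sum_congr rfl fun j _ => hstep j, Finset.sum_sub_distrib, hx i, hy i, hc]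
  obtain ⟨s₀, hs₀⟩ := gordan_aux N hNsub
  refine ⟨s₀.image φ, ?_, ?_⟩
  · intro u hu
    simp only [Finset.mem_image] at hu
    obtain ⟨x, hxs, rfl⟩ := hu
    have hxN : x ∈ N := hs₀ ▸ AddSubmonoid.subset_closure hxs
    refine fun y hy => ((claim1 (φ x)).2 fun i => ?_) y hy
    rw [hxN i]
    exact Int.natCast_nonneg _
  · intro u
    rw [claim1 u]
    have himg : (↑(s₀.image φ) : Set (Fin n → ℤ)) = φ '' (s₀ : Set (ι → ℕ)) := by
      simp [Finset.coe_image]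
    rw [himg, ← AddMonoidHom.map_mclosure, hs₀]
    constructor
    · intro h
      refine ⟨Sum.elim (fun j => (u j).toNat)
        (Sum.elim (fun j => (-u j).toNat) (fun i => (∑ j, u j * v i j).toNat)), ?_, ?_⟩
      · intro i
        have huj : ∀ j, ((φ (Sum.elim (fun j => (u j).toNat)
            (Sum.elim (fun j => (-u j).toNat) (fun i => (∑ j, u j * v i j).toNat)))) j) = u j := by
          intro j
          simp only [hφ, AddMonoidHom.coe_mk, ZeroHom.coe_mk, Sum.elim_inl, Sum.elim_inr]
          omega
        rw [Finset.sum_congr rfl fun j _ => by rw [huj j]]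
        simp only [Sum.elim_inr]
        exact (Int.toNat_of_nonneg (h i)).symm
      · funext j
        simp only [hφ, AddMonoidHom.coe_mk, ZeroHom.coe_mk, Sum.elim_inl, Sum.elim_inr]
        omega
    · rintro ⟨x, hxN, rfl⟩ i
      rw [hxN i]
      exact Int.natCast_nonneg _
end
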